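/- Let κ̄ ∈ (1,e) be the solution of κ(1 − log κ) = 1/2 in (1,e). For every real x ≥ e, one has li̅(x) − li_*(x) ≤ li_1(x) − li_*(x) ≤ D̄ · √(x/log x), where D̄ = ((κ̄ + 3)/(κ̄ − 1))·√(2π/κ̄)·e^(13/12). -/

import Mathlib

/-- The Stieltjes asymptotic approximation of `li(x)`:
`li_*(x) = (x/log x)·Σ_{k=0}^{n−1} k!/(log x)^k + (log x − n)·x·n!/(log x)^(n+1)`
with `n = ⌊log x⌋`. -/
noncomputable def liStar (x : ℝ) : ℝ :=
  x / Real.log x *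
      ∑ k ∈ Finset.range ⌊Real.log x⌋₊, (Nat.factorial k : ℝ) / Real.log x ^ k
    + (Real.log x - ⌊Real.log x⌋₊) * x * (Nat.factorial ⌊Real.log x⌋₊ : ℝ)
      / Real.log x ^ (⌊Real.log x⌋₊ + 1)

/-- The truncated asymptotic approximation of `li(x)` with truncation parameter `κ`
and fractional coefficient `α`:
`li_{κ,α}(x) = (x/log x)·(α·m!/(log x)^m + Σ_{k=0}^{m−1} k!/(log x)^k)` with
`m = ⌊κ·log x⌋`. -/
noncomputable def liApprox (κ α x : ℝ) : ℝ :=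
  x / Real.log x *
    (α * (Nat.factorial ⌊κ * Real.log x⌋₊ : ℝ) / Real.log x ^ ⌊κ * Real.log x⌋₊
      + ∑ k ∈ Finset.range ⌊κ * Real.log x⌋₊, (Nat.factorial k : ℝ) / Real.log x ^ k)

open Finset

/-- Stirling-type upper bound: `k! ≤ e·√k·(k/e)^k` for `k ≥ 1`. -/
lemma factorial_le_stirling (k : ℕ) (hk : 1 ≤ k) :
    (Nat.factorial k : ℝ) ≤ Real.exp 1 * Real.sqrt k * ((k : ℝ) / Real.exp 1) ^ k := by
  obtain ⟨j, rfl⟩ : ∃ j, k = j + 1 := ⟨k - 1, by omega⟩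
  have h1 : Stirling.stirlingSeq (j + 1) ≤ Stirling.stirlingSeq 1 :=
    Stirling.stirlingSeq'_antitone (Nat.zero_le j)
  rw [Stirling.stirlingSeq_one] at h1
  have hk0 : (0:ℝ) < ((j + 1 : ℕ) : ℝ) := by positivity
  have hs2 : (0:ℝ) < Real.sqrt 2 := by positivity
  have hden : 0 < Real.sqrt (2 * ((j + 1 : ℕ) : ℝ)) * (((j + 1 : ℕ) : ℝ) / Real.exp 1) ^ (j + 1) := by
    positivity
  rw [Stirling.stirlingSeq, div_le_div_iff₀ hden hs2] at h1
  have h3 : Real.sqrt (2 * ((j + 1 : ℕ) : ℝ)) = Real.sqrt 2 * Real.sqrt ((j + 1 : ℕ) : ℝ) :=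
    Real.sqrt_mul (by norm_num) _
  rw [h3] at h1
  have h4 : Real.exp 1 * (Real.sqrt 2 * Real.sqrt ((j + 1 : ℕ) : ℝ) *
      (((j + 1 : ℕ) : ℝ) / Real.exp 1) ^ (j + 1)) =
      Real.exp 1 * Real.sqrt ((j + 1 : ℕ) : ℝ) *
      (((j + 1 : ℕ) : ℝ) / Real.exp 1) ^ (j + 1) * Real.sqrt 2 := by ring
  rw [h4] at h1
  exact le_of_mul_le_mul_right h1 hs2

/-- Convexity bound for `t·log t − c·t` on an interval. -/
lemma mul_log_combo {a b t c : ℝ} (ha : 0 ≤ a) (hat : a ≤ t) (htb : t ≤ b) :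
    t * Real.log t - t * c ≤
      max (a * Real.log a - a * c) (b * Real.log b - b * c) := by
  rcases eq_or_lt_of_le (hat.trans htb) with h | hab
  · have h1 : t = a := le_antisymm (h ▸ htb) hat
    subst h1
    exact le_max_left _ _
  · set θ : ℝ := (b - t) / (b - a) with hθdef
    have hba : 0 < b - a := sub_pos.2 hab
    have hθ0 : 0 ≤ θ := div_nonneg (sub_nonneg.2 htb) hba.le
    have hθ1 : 0 ≤ 1 - θ := by
      rw [sub_nonneg, hθdef, div_le_one hba]; linarith
    have hsum : θ + (1 - θ) = 1 := by ring
    have hcomb : θ * a + (1 - θ) * b = t := by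
      have h : θ * (b - a) = b - t := by rw [hθdef]; exact div_mul_cancel₀ _ hba.ne'
      linear_combination -h
    have hb0 : 0 ≤ b := ha.trans (hat.trans htb)
    have hconv := Real.convexOn_mul_log.2 (Set.mem_Ici.2 ha) (Set.mem_Ici.2 hb0)
      hθ0 hθ1 hsum
    simp only [smul_eq_mul] at hconv
    rw [hcomb] at hconv
    have hA : a * Real.log a - a * c ≤ max (a * Real.log a - a * c) (b * Real.log b - b * c) :=
      le_max_left _ _
    have hB : b * Real.log b - b * c ≤ max (a * Real.log a - a * c) (b * Real.log b - b * c) :=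
      le_max_right _ _
    have h1 : θ * (a * Real.log a - a * c) ≤ θ * _ := mul_le_mul_of_nonneg_left hA hθ0
    have h2 : (1 - θ) * (b * Real.log b - b * c) ≤ (1 - θ) * _ :=
      mul_le_mul_of_nonneg_left hB hθ1
    have htc : t * c = (θ * a + (1 - θ) * b) * c := by rw [hcomb]
    linarith [hconv, h1, h2, htc]

set_option maxHeartbeats 2000000 in
/-- With `κ̄ ∈ (1,e)` the solution of `κ(1−log κ) = 1/2`, for every
real `x ≥ e`: `li̅(x) − li_*(x) ≤ li₁(x) − li_*(x) ≤ D̄·√(x/log x)` where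
`li̅(x) = li_{κ̄,ᾱ}(x)`, `li₁(x) = li_{κ̄,1}(x)`, and
`D̄ = ((κ̄+3)/(κ̄−1))·√(2π/κ̄)·e^(13/12)`. -/
theorem li1_sub_liStar_le (κ : ℝ) (hκ1 : 1 < κ) (hκe : κ < Real.exp 1)
    (hsol : κ * (1 - Real.log κ) = 1 / 2) (x : ℝ) (hx : Real.exp 1 ≤ x) :
    liApprox κ (κ * Real.log x - ⌊κ * Real.log x⌋₊) x - liStar x ≤
        liApprox κ 1 x - liStar x ∧
      liApprox κ 1 x - liStar x ≤
        (κ + 3) / (κ - 1) * (Real.sqrt (2 * Real.pi / κ) * Real.exp (13 / 12))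
          * Real.sqrt (x / Real.log x) := by
  have hx0 : 0 < x := lt_of_lt_of_le (Real.exp_pos 1) hx
  simp only [liApprox, liStar]
  set L : ℝ := Real.log x with hLdef
  have hL1 : 1 ≤ L := by
    rw [hLdef, Real.le_log_iff_exp_le hx0]; simpa using hx
  have hL0 : 0 < L := lt_of_lt_of_le one_pos hL1
  have hκ0 : 0 < κ := lt_trans one_pos hκ1
  have hlog2 : (0.6931471803 : ℝ) < Real.log 2 := Real.log_two_gt_d9
  have hlog2' : Real.log 2 < 0.6931471808 := Real.log_two_lt_d9
  -- f(t) = t(1 - log t) is strictly decreasing on [1, ∞)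
  have hf_anti : StrictAntiOn (fun t : ℝ => t * (1 - Real.log t)) (Set.Ici 1) := by
    apply strictAntiOn_of_deriv_neg (convex_Ici 1)
    · apply ContinuousOn.mul continuousOn_id
      apply ContinuousOn.sub continuousOn_const
      apply Real.continuousOn_log.mono
      intro t ht
      simp only [Set.mem_Ici] at ht
      simp only [Set.mem_compl_iff, Set.mem_singleton_iff]
      linarith
    · intro t ht
      rw [interior_Ici] at ht
      have ht1 : (1:ℝ) < t := ht
      have ht0 : t ≠ 0 := by linarith
      have hd : HasDerivAt (fun t : ℝ => t * (1 - Real.log t)) (-Real.log t) t := by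
        have h1 : HasDerivAt Real.log t⁻¹ t := Real.hasDerivAt_log ht0
        have h2 : HasDerivAt (fun u : ℝ => 1 - Real.log u) (-t⁻¹) t := by
          simpa using (h1.const_sub 1)
        have h3 : HasDerivAt (fun u : ℝ => u * (1 - Real.log u)) (1 * (1 - Real.log t) + t * -t⁻¹) t :=
          (hasDerivAt_id t).mul h2
        convert h3 using 1
        simp only [id_eq, one_mul, mul_neg, mul_inv_cancel₀ ht0]
        ring
      rw [hd.deriv]
      have : 0 < Real.log t := Real.log_pos ht1
      linarith
  -- 2 < κ
  have hκ2 : 2 < κ := by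
    by_contra h
    push_neg at h
    rcases lt_or_eq_of_le h with hlt | heq
    · have h2 := hf_anti (Set.mem_Ici.2 hκ1.le) (Set.mem_Ici.2 (by norm_num : (1:ℝ) ≤ 2)) hlt
      simp only at h2
      rw [hsol] at h2
      nlinarith
    · subst heq
      nlinarith
  -- κ < 11/5
  have hlog115 : (0.784 : ℝ) < Real.log (11/5) := by
    have h1 : Real.log (11/5 : ℝ) = Real.log 2 + Real.log (11/10) := by
      rw [← Real.log_mul (by norm_num) (by norm_num)]; norm_num
    have h2 : Real.log (10/11 : ℝ) ≤ 10/11 - 1 := Real.log_le_sub_one_of_pos (by norm_num)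
    have h3 : Real.log (11/10 : ℝ) = - Real.log (10/11) := by
      rw [← Real.log_inv]; norm_num
    rw [h1, h3]
    nlinarith
  have hκ22 : κ < 11/5 := by
    by_contra h
    push_neg at h
    rcases lt_or_eq_of_le h with hlt | heq
    · have h2 := hf_anti (Set.mem_Ici.2 (by norm_num : (1:ℝ) ≤ 11/5)) (Set.mem_Ici.2 hκ1.le) hlt
      simp only at h2
      rw [hsol] at h2
      nlinarith
    · rw [← heq] at hsol
      nlinarith
  -- integer quantities
  set n : ℕ := ⌊L⌋₊ with hndef
  set m : ℕ := ⌊κ * L⌋₊ with hmdef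
  set s : ℕ := ⌈(8/5) * L⌉₊ with hsdef
  have hn1 : 1 ≤ n := Nat.le_floor (by exact_mod_cast hL1)
  have hnL : (n:ℝ) ≤ L := Nat.floor_le hL0.le
  have hLn : L < (n:ℝ) + 1 := Nat.lt_floor_add_one L
  have hmκL : (m:ℝ) ≤ κ * L := Nat.floor_le (by positivity)
  have hκLm : κ * L < (m:ℝ) + 1 := Nat.lt_floor_add_one _
  have hnm : n ≤ m := Nat.floor_mono (by nlinarith)
  have hm1 : 1 ≤ m := le_trans hn1 hnm
  have hn0R : (0:ℝ) < (n:ℝ) := by exact_mod_cast hn1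
  have h85s : (8/5) * L ≤ (s:ℝ) := Nat.le_ceil _
  have hs85 : (s:ℝ) < (8/5) * L + 1 := Nat.ceil_lt_add_one (by positivity)
  have hns : n < s := Nat.lt_ceil.2 (by nlinarith)
  clear_value n m s
  -- log(8/5) ≤ 1/2
  have hlog85 : Real.log (8/5 : ℝ) ≤ 1/2 := by
    have he2 : Real.exp (1/2 : ℝ) * Real.exp (1/2 : ℝ) = Real.exp 1 := by
      rw [← Real.exp_add]; norm_num
    have h16 : (8/5 : ℝ) ≤ Real.exp (1/2) := by
      nlinarith [Real.exp_one_gt_d9, Real.exp_pos (1/2 : ℝ)]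
    rw [Real.log_le_iff_le_exp (by norm_num)]
    exact h16
  -- Lemma A : n(1 + log L - log n) ≥ (4/5) L
  have hA : (4/5) * L ≤ (n:ℝ) * (1 + Real.log L - Real.log n) := by
    rcases le_or_gt 2 n with hn2 | hn2
    · have hn2' : (2:ℝ) ≤ (n:ℝ) := by exact_mod_cast hn2
      have hpos : (0:ℝ) < (n:ℝ) / L := by positivity
      have hlog : Real.log ((n:ℝ)/L) ≤ (n:ℝ)/L - 1 := Real.log_le_sub_one_of_pos hpos
      have hlogd : Real.log ((n:ℝ)/L) = Real.log n - Real.log L :=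
        Real.log_div hn0R.ne' hL0.ne'
      have key : 1 - (n:ℝ)/L ≤ Real.log L - Real.log n := by
        rw [hlogd] at hlog; linarith
      have h1 : (n:ℝ) * (2 - (n:ℝ)/L) ≤ (n:ℝ) * (1 + Real.log L - Real.log n) := by
        apply mul_le_mul_of_nonneg_left _ hn0R.le
        linarith
      have h2 : (4/5) * L ≤ (n:ℝ) * (2 - (n:ℝ)/L) := by
        have expand : (n:ℝ) * (2 - (n:ℝ)/L) = (2*(n:ℝ)*L - (n:ℝ)^2)/L := by
          field_simp
        rw [expand, le_div_iff₀ hL0]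
        nlinarith [mul_nonneg (sub_nonneg.2 hnL) (sub_nonneg.2 hLn.le)]
      linarith
    · have hn1' : n = 1 := by omega
      rw [hn1']
      have hL2 : L < 2 := by
        rw [hn1'] at hLn; push_cast at hLn; linarith
      -- log L ≥ (L-1) log 2 by concavity of log on [1,2]
      have hw1 : (0:ℝ) ≤ 2 - L := by linarith
      have hw2 : (0:ℝ) ≤ L - 1 := by linarith
      have hcon := strictConcaveOn_log_Ioi.concaveOn.2 (Set.mem_Ioi.2 one_pos)
        (Set.mem_Ioi.2 two_pos) hw1 hw2 (by ring)
      simp only [smul_eq_mul, mul_one, Real.log_one, mul_zero, zero_add] at hcon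
      have hpt : (2 - L) * 1 + (L - 1) * 2 = L := by ring
      rw [show (2 - L) + (L - 1) * 2 = L by ring] at hcon
      push_cast
      simp only [Real.log_one]
      nlinarith
  -- generic per-term bound
  have hterm : ∀ (k : ℕ) (E : ℝ), 1 ≤ k → (k:ℝ) ≤ κ * L →
      (k:ℝ) * Real.log k - (k:ℝ) * (1 + Real.log L) ≤ E →
      (Nat.factorial k : ℝ) / L ^ k ≤ Real.exp 1 * Real.sqrt (κ*L) * Real.exp E := by
    intro k E hk hkκL hE
    have hk0 : (0:ℝ) < (k:ℝ) := by exact_mod_cast hk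
    have hLk : (0:ℝ) < L ^ k := pow_pos hL0 k
    have h1 : (Nat.factorial k : ℝ) / L ^ k ≤
        (Real.exp 1 * Real.sqrt k * ((k:ℝ)/Real.exp 1)^k) / L ^ k := by
      rw [div_eq_mul_inv, div_eq_mul_inv]
      exact mul_le_mul_of_nonneg_right (factorial_le_stirling k hk)
        (inv_nonneg.2 hLk.le)
    have h2 : (Real.exp 1 * Real.sqrt k * ((k:ℝ)/Real.exp 1)^k) / L ^ k =
        Real.exp 1 * Real.sqrt k * ((k:ℝ)/(Real.exp 1 * L))^k := by
      rw [mul_div_assoc, ← div_pow, div_div]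
    have hq : (0:ℝ) < (k:ℝ)/(Real.exp 1 * L) := by positivity
    have h3 : ((k:ℝ)/(Real.exp 1 * L))^k =
        Real.exp ((k:ℝ) * Real.log ((k:ℝ)/(Real.exp 1 * L))) := by
      conv_lhs => rw [← Real.exp_log hq]
      rw [← Real.exp_nat_mul]
    have h4 : Real.log ((k:ℝ)/(Real.exp 1 * L)) = Real.log k - (1 + Real.log L) := by
      rw [Real.log_div hk0.ne' (by positivity), Real.log_mul (Real.exp_ne_zero 1) hL0.ne',
        Real.log_exp]
    have h5 : Real.exp ((k:ℝ) * Real.log ((k:ℝ)/(Real.exp 1 * L))) ≤ Real.exp E := by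
      apply Real.exp_le_exp.2
      rw [h4]
      nlinarith [hE]
    have h6 : Real.sqrt k ≤ Real.sqrt (κ*L) := Real.sqrt_le_sqrt hkκL
    calc (Nat.factorial k : ℝ) / L ^ k
        ≤ Real.exp 1 * Real.sqrt k * ((k:ℝ)/(Real.exp 1 * L))^k := by rw [← h2]; exact h1
      _ = Real.exp 1 * Real.sqrt k *
          Real.exp ((k:ℝ) * Real.log ((k:ℝ)/(Real.exp 1 * L))) := by rw [h3]
      _ ≤ Real.exp 1 * Real.sqrt (κ*L) * Real.exp E := by
          apply mul_le_mul
          · exact mul_le_mul_of_nonneg_left h6 (Real.exp_pos 1).le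
          · exact h5
          · positivity
          · positivity
  -- exponent bound at the top endpoint m
  have htop_exp : (m:ℝ) * Real.log m - (m:ℝ) * (1 + Real.log L) ≤ -(L/2) := by
    have hnmR : (n:ℝ) ≤ (m:ℝ) := by exact_mod_cast hnm
    refine le_trans (mul_log_combo hn0R.le hnmR hmκL) (max_le ?_ ?_)
    · have hr : (n:ℝ) * Real.log n - (n:ℝ) * (1 + Real.log L)
          = -((n:ℝ) * (1 + Real.log L - Real.log n)) := by ring
      rw [hr]
      linarith
    · have hlogκL : Real.log (κ*L) = Real.log κ + Real.log L :=
        Real.log_mul hκ0.ne' hL0.ne'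
      rw [hlogκL]
      have : κ * L * (Real.log κ + Real.log L) - κ * L * (1 + Real.log L) = -(L/2) := by
        linear_combination (-L) * hsol
      linarith [this.le]
  -- exponent bound for the bottom range
  have hbot_exp : ∀ k : ℕ, (n:ℝ) ≤ (k:ℝ) → (k:ℝ) ≤ (8/5)*L →
      (k:ℝ) * Real.log k - (k:ℝ) * (1 + Real.log L) ≤ -((4/5)*L) := by
    intro k hk1 hk2
    refine le_trans (mul_log_combo hn0R.le hk1 hk2) (max_le ?_ ?_)
    · have hr : (n:ℝ) * Real.log n - (n:ℝ) * (1 + Real.log L)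
          = -((n:ℝ) * (1 + Real.log L - Real.log n)) := by ring
      rw [hr]
      linarith
    · have hlog85L : Real.log ((8/5)*L) = Real.log (8/5) + Real.log L :=
        Real.log_mul (by norm_num) hL0.ne'
      rw [hlog85L]
      nlinarith [hL0.le, hlog85]
  -- geometric decay of terms above s
  have geo : ∀ d k : ℕ, k + d = m → s ≤ k →
      (Nat.factorial k : ℝ) / L ^ k ≤ (Nat.factorial m : ℝ) / L ^ m * (5/8)^d := by
    intro d
    induction d with
    | zero =>
      intro k hk _
      have : k = m := by omega
      subst this
      simp
    | succ d ih =>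
      intro k hk hs
      have hL0' : L ≠ 0 := hL0.ne'
      have hk10 : ((k:ℝ) + 1) ≠ 0 := by positivity
      have hrec : (Nat.factorial k : ℝ) / L ^ k =
          (Nat.factorial (k+1) : ℝ) / L ^ (k+1) * (L / ((k:ℝ)+1)) := by
        rw [Nat.factorial_succ]
        push_cast
        rw [pow_succ]
        field_simp
      have hrat : L / ((k:ℝ)+1) ≤ 5/8 := by
        rw [div_le_iff₀ (by positivity)]
        have hsk : (s:ℝ) ≤ (k:ℝ) := by exact_mod_cast hs
        linarith
      have hih := ih (k+1) (by omega) (by omega)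
      have hpos1 : (0:ℝ) ≤ L / ((k:ℝ)+1) := by positivity
      have hpos2 : (0:ℝ) ≤ (Nat.factorial m : ℝ) / L ^ m * (5/8)^d := by positivity
      calc (Nat.factorial k : ℝ) / L ^ k
          = (Nat.factorial (k+1) : ℝ) / L ^ (k+1) * (L / ((k:ℝ)+1)) := hrec
        _ ≤ (Nat.factorial m : ℝ) / L ^ m * (5/8)^d * (5/8) :=
            mul_le_mul hih hrat hpos1 hpos2
        _ = (Nat.factorial m : ℝ) / L ^ m * (5/8)^(d+1) := by ring
  -- bound for the top sum
  have ham : (Nat.factorial m : ℝ) / L ^ m ≤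
      Real.exp 1 * Real.sqrt (κ*L) * Real.exp (-(L/2)) :=
    hterm m _ hm1 hmκL htop_exp
  have htopsum : ∑ k ∈ Ico s (m+1), (Nat.factorial k : ℝ) / L ^ k ≤
      (8/3) * (Real.exp 1 * Real.sqrt (κ*L) * Real.exp (-(L/2))) := by
    have step1 : ∑ k ∈ Ico s (m+1), (Nat.factorial k : ℝ) / L ^ k ≤
        ∑ k ∈ Ico s (m+1), (Nat.factorial m : ℝ) / L ^ m * (5/8:ℝ)^(m-k) := by
      apply Finset.sum_le_sum
      intro k hk
      rw [Finset.mem_Ico] at hk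
      exact geo (m-k) k (by omega) hk.1
    have step2 : ∑ k ∈ Ico s (m+1), (Nat.factorial m : ℝ) / L ^ m * (5/8:ℝ)^(m-k)
        = (Nat.factorial m : ℝ) / L ^ m * ∑ i ∈ range (m+1-s), (5/8:ℝ)^i := by
      calc ∑ k ∈ Ico s (m+1), (Nat.factorial m : ℝ) / L ^ m * (5/8:ℝ)^(m-k)
          = ∑ i ∈ range (m+1-s), (Nat.factorial m : ℝ) / L ^ m * (5/8:ℝ)^(m-(s+i)) :=
            Finset.sum_Ico_eq_sum_range _ _ _
        _ = ∑ i ∈ range (m+1-s),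
            (fun j => (Nat.factorial m : ℝ) / L ^ m * (5/8:ℝ)^j) ((m+1-s) - 1 - i) := by
            apply Finset.sum_congr rfl
            intro i hi
            rw [Finset.mem_range] at hi
            simp only
            congr 2
            omega
        _ = ∑ i ∈ range (m+1-s), (Nat.factorial m : ℝ) / L ^ m * (5/8:ℝ)^i :=
            Finset.sum_range_reflect (fun j => (Nat.factorial m : ℝ) / L ^ m * (5/8:ℝ)^j) (m+1-s)
        _ = (Nat.factorial m : ℝ) / L ^ m * ∑ i ∈ range (m+1-s), (5/8:ℝ)^i := by
            rw [Finset.mul_sum]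
    have step3 : ∑ i ∈ range (m+1-s), (5/8:ℝ)^i ≤ 8/3 := by
      rw [geom_sum_eq (by norm_num : (5/8:ℝ) ≠ 1)]
      rw [div_le_iff_of_neg (by norm_num : (5/8:ℝ) - 1 < 0)]
      have : (0:ℝ) ≤ (5/8:ℝ)^(m+1-s) := by positivity
      nlinarith
    have hfm : (0:ℝ) ≤ (Nat.factorial m : ℝ) / L ^ m := by
      have := pow_pos hL0 m
      positivity
    calc ∑ k ∈ Ico s (m+1), (Nat.factorial k : ℝ) / L ^ k
        ≤ (Nat.factorial m : ℝ) / L ^ m * ∑ i ∈ range (m+1-s), (5/8:ℝ)^i := by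
          rw [← step2]; exact step1
      _ ≤ (Nat.factorial m : ℝ) / L ^ m * (8/3) :=
          mul_le_mul_of_nonneg_left step3 hfm
      _ = (8/3) * ((Nat.factorial m : ℝ) / L ^ m) := by ring
      _ ≤ (8/3) * (Real.exp 1 * Real.sqrt (κ*L) * Real.exp (-(L/2))) :=
          mul_le_mul_of_nonneg_left ham (by norm_num)
  -- bound for the bottom sum
  have hbotsum : ∑ k ∈ Ico n s, (Nat.factorial k : ℝ) / L ^ k ≤
      ((3/5)*L + 2) * (Real.exp 1 * Real.sqrt (κ*L) * Real.exp (-((4/5)*L))) := by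
    have hB : ∀ k ∈ Ico n s, (Nat.factorial k : ℝ) / L ^ k ≤
        Real.exp 1 * Real.sqrt (κ*L) * Real.exp (-((4/5)*L)) := by
      intro k hk
      rw [Finset.mem_Ico] at hk
      have hkn : (n:ℝ) ≤ (k:ℝ) := by exact_mod_cast hk.1
      have hks : (k:ℝ) < (8/5)*L := by
        have h := hk.2
        rw [hsdef] at h
        exact Nat.lt_ceil.1 h
      exact hterm k _ (le_trans hn1 hk.1) (by nlinarith) (hbot_exp k hkn hks.le)
    calc ∑ k ∈ Ico n s, (Nat.factorial k : ℝ) / L ^ k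
        ≤ (Ico n s).card • (Real.exp 1 * Real.sqrt (κ*L) * Real.exp (-((4/5)*L))) :=
          Finset.sum_le_card_nsmul _ _ _ hB
      _ = ((s - n : ℕ) : ℝ) * (Real.exp 1 * Real.sqrt (κ*L) * Real.exp (-((4/5)*L))) := by
          rw [Nat.card_Ico, nsmul_eq_mul]
      _ ≤ ((3/5)*L + 2) * (Real.exp 1 * Real.sqrt (κ*L) * Real.exp (-((4/5)*L))) := by
          apply mul_le_mul_of_nonneg_right _ (by positivity)
          rw [Nat.cast_sub hns.le]
          linarith
  -- splitting the sum
  have hsplit : ∑ k ∈ Ico n (m+1), (Nat.factorial k : ℝ) / L ^ k ≤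
      (∑ k ∈ Ico n s, (Nat.factorial k : ℝ) / L ^ k)
      + ∑ k ∈ Ico s (m+1), (Nat.factorial k : ℝ) / L ^ k := by
    have hnonneg : ∀ k : ℕ, (0:ℝ) ≤ (Nat.factorial k : ℝ) / L ^ k := fun k => by
      have := pow_pos hL0 k
      positivity
    rcases le_or_gt s (m+1) with h | h
    · rw [Finset.sum_Ico_consecutive _ hns.le h]
    · have hsub : Ico n (m+1) ⊆ Ico n s := Finset.Ico_subset_Ico le_rfl h.le
      have h1 := Finset.sum_le_sum_of_subset_of_nonneg hsub
        (fun i _ _ => hnonneg i)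
      have h2 : (0:ℝ) ≤ ∑ k ∈ Ico s (m+1), (Nat.factorial k : ℝ) / L ^ k :=
        Finset.sum_nonneg fun i _ => hnonneg i
      linarith
  -- bottom coefficient absorbed: (3/5 L + 2) e^{-4/5 L} ≤ 2 e^{-L/2}
  have hbot2 : ((3/5)*L + 2) * Real.exp (-((4/5)*L)) ≤ 2 * Real.exp (-(L/2)) := by
    have k1 : (3/5)*L + 2 ≤ (13/5) * Real.exp ((3/10)*(L-1)) := by
      have h := Real.add_one_le_exp ((3/10)*(L-1))
      nlinarith
    have k2 : (13/10:ℝ) ≤ Real.exp (3/10 : ℝ) := by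
      have := Real.add_one_le_exp (3/10 : ℝ); linarith
    have k5 : Real.exp (-(3/10) : ℝ) * Real.exp (3/10 : ℝ) = 1 := by
      rw [← Real.exp_add]; norm_num
    have k4 : Real.exp (-(3/10) : ℝ) ≤ 10/13 := by
      nlinarith [Real.exp_pos (-(3/10) : ℝ)]
    have k3 : Real.exp ((3/10)*(L-1)) * Real.exp (-((4/5)*L)) =
        Real.exp (-(3/10) : ℝ) * Real.exp (-(L/2)) := by
      rw [← Real.exp_add, ← Real.exp_add]
      ring_nf
    calc ((3/5)*L + 2) * Real.exp (-((4/5)*L))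
        ≤ (13/5) * Real.exp ((3/10)*(L-1)) * Real.exp (-((4/5)*L)) :=
          mul_le_mul_of_nonneg_right k1 (Real.exp_pos _).le
      _ = (13/5) * (Real.exp (-(3/10) : ℝ) * Real.exp (-(L/2))) := by
          rw [mul_assoc, k3]
      _ ≤ (13/5) * ((10/13) * Real.exp (-(L/2))) := by
          apply mul_le_mul_of_nonneg_left _ (by norm_num)
          exact mul_le_mul_of_nonneg_right k4 (Real.exp_pos _).le
      _ = 2 * Real.exp (-(L/2)) := by ring
  -- total sum bound
  have hSsum : ∑ k ∈ Ico n (m+1), (Nat.factorial k : ℝ) / L ^ k ≤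
      (14/3) * (Real.exp 1 * Real.sqrt (κ*L) * Real.exp (-(L/2))) := by
    have hE1 : (0:ℝ) ≤ Real.exp 1 * Real.sqrt (κ*L) := by positivity
    have hb : ((3/5)*L + 2) * (Real.exp 1 * Real.sqrt (κ*L) * Real.exp (-((4/5)*L)))
        ≤ 2 * (Real.exp 1 * Real.sqrt (κ*L) * Real.exp (-(L/2))) := by
      have := mul_le_mul_of_nonneg_left hbot2 hE1
      nlinarith [this]
    linarith [hsplit, hbotsum, htopsum, hb]
  -- identity: (x/L)·√(κL)·e^{−L/2} = √κ·√(x/L)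
  have hsx : Real.sqrt x = Real.exp (L/2) := by
    have hxx : Real.exp (L/2) * Real.exp (L/2) = x := by
      rw [← Real.exp_add, show L/2 + L/2 = L by ring, hLdef, Real.exp_log hx0]
    rw [← hxx, Real.sqrt_mul_self (Real.exp_pos _).le]
  have hexpinv : Real.exp (-(L/2)) = (Real.sqrt x)⁻¹ := by
    rw [hsx, ← Real.exp_neg]
  have hL' : Real.sqrt L * Real.sqrt L = L := Real.mul_self_sqrt hL0.le
  have hx' : Real.sqrt x * Real.sqrt x = x := Real.mul_self_sqrt hx0.le
  have hsqx0 : 0 < Real.sqrt x := Real.sqrt_pos.2 hx0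
  have hsqL0 : 0 < Real.sqrt L := Real.sqrt_pos.2 hL0
  have hid : x / L * (Real.sqrt (κ*L) * Real.exp (-(L/2))) =
      Real.sqrt κ * Real.sqrt (x/L) := by
    rw [Real.sqrt_mul hκ0.le, Real.sqrt_div hx0.le, hexpinv]
    field_simp
    ring_nf
    linear_combination x * hL' - L * hx'
  -- final numeric comparison
  have hnum : (14/3) * (Real.exp 1 * Real.sqrt κ) ≤
      (κ+3)/(κ-1) * (Real.sqrt (2*Real.pi/κ) * Real.exp (13/12)) := by
    have h1 : Real.sqrt κ ≤ 1.49 := by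
      rw [show (1.49:ℝ) = Real.sqrt (1.49^2) by
        rw [Real.sqrt_sq (by norm_num)]]
      exact Real.sqrt_le_sqrt (by nlinarith)
    have hπ : (3.141592:ℝ) < Real.pi := Real.pi_gt_d6
    have h2 : (1.68:ℝ) ≤ Real.sqrt (2*Real.pi/κ) := by
      have hq : (1.68:ℝ)^2 ≤ 2*Real.pi/κ := by
        rw [le_div_iff₀ hκ0]
        nlinarith
      calc (1.68:ℝ) = Real.sqrt (1.68^2) := by rw [Real.sqrt_sq (by norm_num)]
        _ ≤ _ := Real.sqrt_le_sqrt hq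
    have h3 : (2.9448:ℝ) ≤ Real.exp (13/12) := by
      have he : Real.exp (13/12 : ℝ) = Real.exp 1 * Real.exp (1/12 : ℝ) := by
        rw [← Real.exp_add]; norm_num
      have h4 : (1:ℝ) + 1/12 ≤ Real.exp (1/12 : ℝ) := by
        linarith [Real.add_one_le_exp (1/12 : ℝ)]
      nlinarith [Real.exp_one_gt_d9, Real.exp_pos (1/12 : ℝ)]
    have h5 : (13/3:ℝ) ≤ (κ+3)/(κ-1) := by
      rw [le_div_iff₀ (by linarith : (0:ℝ) < κ - 1)]
      nlinarith
    have he9 : Real.exp 1 < 2.7182818286 := Real.exp_one_lt_d9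
    have hBC : (1.68:ℝ) * 2.9448 ≤ Real.sqrt (2*Real.pi/κ) * Real.exp (13/12) :=
      mul_le_mul h2 h3 (by norm_num) (Real.sqrt_nonneg _)
    have hABC : (13/3:ℝ) * (1.68 * 2.9448) ≤
        (κ+3)/(κ-1) * (Real.sqrt (2*Real.pi/κ) * Real.exp (13/12)) :=
      mul_le_mul h5 hBC (by norm_num) (le_trans (by norm_num) h5)
    have hLHS : (14/3:ℝ) * (Real.exp 1 * Real.sqrt κ) ≤
        (14/3) * (2.7182818286 * 1.49) := by
      apply mul_le_mul_of_nonneg_left _ (by norm_num)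
      exact mul_le_mul he9.le h1 (Real.sqrt_nonneg _) (by norm_num)
    calc (14/3) * (Real.exp 1 * Real.sqrt κ) ≤ (14/3) * (2.7182818286 * 1.49) := hLHS
      _ ≤ (13/3:ℝ) * (1.68 * 2.9448) := by norm_num
      _ ≤ _ := hABC
  -- main inequality: li₁ − li⋆ ≤ (x/L)·Σ
  have hnonneg' : 0 ≤ (L - (n:ℝ)) * x * (Nat.factorial n : ℝ) / L^(n+1) := by
    apply div_nonneg _ (pow_pos hL0 (n+1)).le
    exact mul_nonneg (mul_nonneg (sub_nonneg.2 hnL) hx0.le) (Nat.cast_nonneg _)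
  have hxL0 : 0 ≤ x / L := div_nonneg hx0.le hL0.le
  have heq : x/L * (1 * (Nat.factorial m : ℝ)/L^m + ∑ k ∈ range m, (Nat.factorial k:ℝ)/L^k)
      - x/L * ∑ k ∈ range n, (Nat.factorial k:ℝ)/L^k
      = x/L * ∑ k ∈ Ico n (m+1), (Nat.factorial k:ℝ)/L^k := by
    rw [Finset.sum_Ico_succ_top hnm, ← Finset.sum_range_add_sum_Ico _ hnm]
    ring
  constructor
  · -- part 1 : monotonicity in α
    apply sub_le_sub_right
    apply mul_le_mul_of_nonneg_left _ hxL0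
    apply add_le_add_left
    rw [div_eq_mul_inv, div_eq_mul_inv]
    apply mul_le_mul_of_nonneg_right _ (inv_nonneg.2 (pow_pos hL0 m).le)
    apply mul_le_mul_of_nonneg_right _ (Nat.cast_nonneg _)
    linarith
  · -- part 2
    calc x/L * (1 * (Nat.factorial m : ℝ)/L^m + ∑ k ∈ range m, (Nat.factorial k:ℝ)/L^k)
        - (x/L * ∑ k ∈ range n, (Nat.factorial k:ℝ)/L^k
          + (L - (n:ℝ)) * x * (Nat.factorial n : ℝ) / L^(n+1))
        ≤ x/L * ∑ k ∈ Ico n (m+1), (Nat.factorial k:ℝ)/L^k := by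
          linarith [heq, hnonneg']
      _ ≤ x/L * ((14/3) * (Real.exp 1 * Real.sqrt (κ*L) * Real.exp (-(L/2)))) :=
          mul_le_mul_of_nonneg_left hSsum hxL0
      _ = (14/3) * (Real.exp 1 * Real.sqrt κ) * Real.sqrt (x/L) := by
          rw [show x/L * ((14/3) * (Real.exp 1 * Real.sqrt (κ*L) * Real.exp (-(L/2))))
            = (14/3) * Real.exp 1 * (x/L * (Real.sqrt (κ*L) * Real.exp (-(L/2)))) by ring]
          rw [hid]
          ring
      _ ≤ (κ+3)/(κ-1) * (Real.sqrt (2*Real.pi/κ) * Real.exp (13/12)) * Real.sqrt (x/L) :=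
          mul_le_mul_of_nonneg_right hnum (Real.sqrt_nonneg _)
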